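/- Let H be a finite-dimensional weak Hopf algebra with non-degenerate left integral ℓ. Then ℓ is separating for right multiplication by H_s: for y ∈ H_s, ℓy = 0 implies y = 0; moreover the map y ↦ ℓy is a linear isomorphism from H_s onto the space of left integrals in H. -/

import Mathlib

open TensorProduct

/-- A weak Hopf algebra over a field `k` (Böhm–Nill–Szlachányi):
an algebra and coalgebra with multiplicative comultiplication, the weak
unit/counit axioms, and an antipode. -/
structure WeakHopf (k H : Type*) [Field k] [Ring H] [Algebra k H] where
  comul : H →ₗ[k] H ⊗[k] H
  counit : H →ₗ[k] k
  antipode : H →ₗ[k] H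
  coassoc : ∀ h : H,
    (TensorProduct.assoc k H H H) ((TensorProduct.map comul LinearMap.id) (comul h)) =
      (TensorProduct.map LinearMap.id comul) (comul h)
  counit_comul : ∀ h : H,
    (TensorProduct.lid k H) ((TensorProduct.map counit LinearMap.id) (comul h)) = h
  comul_counit : ∀ h : H,
    (TensorProduct.rid k H) ((TensorProduct.map LinearMap.id counit) (comul h)) = h
  comul_mul : ∀ a b : H, comul (a * b) = comul a * comul b
  -- (Δ⊗id)Δ(1) = (Δ(1)⊗1)(1⊗Δ(1)) = (1⊗Δ(1))(Δ(1)⊗1)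
  weak_unit_left :
    (TensorProduct.map comul LinearMap.id) (comul 1) =
      (comul 1 ⊗ₜ[k] (1 : H)) *
        ((TensorProduct.assoc k H H H).symm ((1 : H) ⊗ₜ[k] comul 1))
  weak_unit_right :
    (TensorProduct.map comul LinearMap.id) (comul 1) =
      ((TensorProduct.assoc k H H H).symm ((1 : H) ⊗ₜ[k] comul 1)) *
        (comul 1 ⊗ₜ[k] (1 : H))
  -- ε(fgh) = ε(fg₁)ε(g₂h) = ε(fg₂)ε(g₁h)
  weak_counit_left : ∀ f g h : H,
    counit (f * g * h) =
      (TensorProduct.lid k k)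
        ((TensorProduct.map (counit ∘ₗ LinearMap.mulLeft k f)
          (counit ∘ₗ LinearMap.mulRight k h)) (comul g))
  weak_counit_right : ∀ f g h : H,
    counit (f * g * h) =
      (TensorProduct.lid k k)
        ((TensorProduct.map (counit ∘ₗ LinearMap.mulLeft k f)
          (counit ∘ₗ LinearMap.mulRight k h)) ((TensorProduct.comm k H H) (comul g)))
  -- h₁S(h₂) = ε(1₁h)1₂  (target counital map)
  antipode_right : ∀ h : H,
    (LinearMap.mul' k H) ((TensorProduct.map LinearMap.id antipode) (comul h)) =
      (TensorProduct.lid k H)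
        ((TensorProduct.map (counit ∘ₗ LinearMap.mulRight k h) LinearMap.id) (comul 1))
  -- S(h₁)h₂ = 1₁ε(h1₂)  (source counital map)
  antipode_left : ∀ h : H,
    (LinearMap.mul' k H) ((TensorProduct.map antipode LinearMap.id) (comul h)) =
      (TensorProduct.rid k H)
        ((TensorProduct.map LinearMap.id (counit ∘ₗ LinearMap.mulLeft k h)) (comul 1))
  -- S(h₁)h₂S(h₃) = S(h)
  antipode_mid : ∀ h : H,
    (LinearMap.mul' k H)
      ((TensorProduct.map (LinearMap.mul' k H ∘ₗ TensorProduct.map antipode LinearMap.id)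
        antipode) ((TensorProduct.map comul LinearMap.id) (comul h))) = antipode h

namespace WeakHopf

variable {k H : Type*} [Field k] [Ring H] [Algebra k H] (W : WeakHopf k H)

/-- The target counital map ε_t(h) = ε(1₁h)1₂, as a linear map. -/
noncomputable def εtL : H →ₗ[k] H :=
  (TensorProduct.lid k H).toLinearMap
    ∘ₗ TensorProduct.map
        (W.counit ∘ₗ LinearMap.mul' k H ∘ₗ (TensorProduct.comm k H H).toLinearMap)
        LinearMap.id
    ∘ₗ (TensorProduct.assoc k H H H).symm.toLinearMap
    ∘ₗ (TensorProduct.mk k H (H ⊗[k] H)).flip (W.comul 1)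

/-- The source counital map ε_s(h) = 1₁ε(h1₂), as a linear map. -/
noncomputable def εsL : H →ₗ[k] H :=
  (TensorProduct.rid k H).toLinearMap
    ∘ₗ TensorProduct.map LinearMap.id
        (W.counit ∘ₗ LinearMap.mul' k H ∘ₗ (TensorProduct.comm k H H).toLinearMap)
    ∘ₗ (TensorProduct.assoc k H H H).toLinearMap
    ∘ₗ (TensorProduct.mk k (H ⊗[k] H) H) (W.comul 1)

/-- The minimal weak Hopf subalgebra H_min = H_t H_s (as a subspace). -/
noncomputable def Hmin : Submodule k H :=
  Submodule.span k
    {x : H | ∃ z ∈ Set.range ⇑W.εtL, ∃ y ∈ Set.range ⇑W.εsL, x = z * y}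

/-- g ∈ H is group-like: invertible and Δ(g) = (g⊗g)Δ(1) = Δ(1)(g⊗g). -/
def IsGroupLike (g : H) : Prop :=
  IsUnit g ∧ W.comul g = (g ⊗ₜ[k] g) * W.comul 1 ∧
    W.comul g = W.comul 1 * (g ⊗ₜ[k] g)

/-- The convolution product on H* = (H →ₗ[k] k): ⟨φψ, h⟩ = ⟨φ, h₁⟩⟨ψ, h₂⟩. -/
noncomputable def dualMul (φ ψ : H →ₗ[k] k) : H →ₗ[k] k :=
  (TensorProduct.lid k k).toLinearMap ∘ₗ TensorProduct.map φ ψ ∘ₗ W.comul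

/-- γ ∈ H* is group-like: invertible in H* and
⟨γ,hg⟩ = ⟨γ,h1₁⟩⟨γ,S(1₂)g⟩ = ⟨γ,hS(1₁)⟩⟨γ,1₂g⟩ for all h,g. -/
noncomputable def IsGroupLikeDual (γ : H →ₗ[k] k) : Prop :=
  (∃ β : H →ₗ[k] k, W.dualMul γ β = W.counit ∧ W.dualMul β γ = W.counit) ∧
  (∀ h g : H, γ (h * g) =
    (TensorProduct.lid k k)
      ((TensorProduct.map (γ ∘ₗ LinearMap.mulLeft k h)
        (γ ∘ₗ LinearMap.mulRight k g ∘ₗ W.antipode)) (W.comul 1))) ∧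
  (∀ h g : H, γ (h * g) =
    (TensorProduct.lid k k)
      ((TensorProduct.map (γ ∘ₗ LinearMap.mulLeft k h ∘ₗ W.antipode)
        (γ ∘ₗ LinearMap.mulRight k g)) (W.comul 1)))

/-- x is a left integral in H: hx = ε_t(h)x for all h. -/
def IsLeftIntegral (x : H) : Prop := ∀ h : H, h * x = W.εtL h * x

/-- The space of left integrals in H. -/
noncomputable def leftIntegrals : Submodule k H where
  carrier := {x : H | ∀ h : H, h * x = W.εtL h * x}
  add_mem' := fun ha hb h => by rw [mul_add, ha h, hb h, mul_add]
  zero_mem' := fun h => by rw [mul_zero, mul_zero]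
  smul_mem' := fun c x hx h => by rw [mul_smul_comm, hx h, mul_smul_comm]

/-- λ ∈ H* is a left integral in H*: equivalently h₁λ(h₂) = ε_s(h₁)λ(h₂). -/
noncomputable def IsLeftIntegralDual (lam : H →ₗ[k] k) : Prop :=
  ∀ h : H,
    (TensorProduct.rid k H) ((TensorProduct.map LinearMap.id lam) (W.comul h)) =
      (TensorProduct.rid k H) ((TensorProduct.map W.εsL lam) (W.comul h))

/-- The action y·h := ⟨γ, yh1₁⟩S(1₂) of H on H_s associated to γ ∈ H*. -/
noncomputable def act (γ : H →ₗ[k] k) (y h : H) : H :=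
  (TensorProduct.lid k H)
    ((TensorProduct.map (γ ∘ₗ LinearMap.mulLeft k (y * h)) W.antipode) (W.comul 1))

/-- ε_t^g(ψ) ∈ H*, given by ⟨ε_t^g(ψ), x⟩ = ε(S(x)g₁)ψ(g₂). -/
noncomputable def etg (g : H) (ψ : H →ₗ[k] k) : H →ₗ[k] k :=
  (TensorProduct.lid k k).toLinearMap
    ∘ₗ TensorProduct.map (W.counit ∘ₗ LinearMap.mul' k H) ψ
    ∘ₗ (TensorProduct.assoc k H H H).symm.toLinearMap
    ∘ₗ (TensorProduct.mk k H (H ⊗[k] H)).flip (W.comul g)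
    ∘ₗ W.antipode

/-- L_g = {φ ∈ H* : ψφ = ε_t^g(ψ)φ for all ψ}. -/
noncomputable def Lset (g : H) : Set (H →ₗ[k] k) :=
  {φ | ∀ ψ : H →ₗ[k] k, W.dualMul ψ φ = W.dualMul (W.etg g ψ) φ}

end WeakHopf

section Aux
set_option synthInstance.maxHeartbeats 1000000
set_option maxHeartbeats 1000000

open TensorProduct

variable {k H : Type*} [Field k] [Ring H] [Algebra k H] (W : WeakHopf k H)

/-- ε_s(x) = 1₁ ε(x 1₂), rewritten with the map `ε ∘ (x * ·)` in the second slot. -/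
lemma WeakHopf.εsL_eq (x : H) :
    W.εsL x = (TensorProduct.rid k H)
      ((TensorProduct.map LinearMap.id (W.counit ∘ₗ LinearMap.mulLeft k x)) (W.comul 1)) := by
  have key : ∀ t : H ⊗[k] H,
      (TensorProduct.rid k H)
        ((TensorProduct.map LinearMap.id
          (W.counit ∘ₗ LinearMap.mul' k H ∘ₗ (TensorProduct.comm k H H).toLinearMap))
          ((TensorProduct.assoc k H H H) (t ⊗ₜ[k] x))) =
      (TensorProduct.rid k H)
        ((TensorProduct.map LinearMap.id (W.counit ∘ₗ LinearMap.mulLeft k x)) t) := by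
    intro t
    induction t using TensorProduct.induction_on with
    | zero => simp
    | tmul a b => simp [LinearMap.mul'_apply]
    | add u v hu hv => simp only [add_tmul, map_add, hu, hv]
  simpa [WeakHopf.εsL] using key (W.comul 1)

/-- Δ(ε_s(x)) = Δ(1)·(1 ⊗ ε_s(x)). -/
lemma WeakHopf.comul_εsL (x : H) :
    W.comul (W.εsL x) = W.comul 1 * ((1 : H) ⊗ₜ[k] W.εsL x) := by
  set f : H →ₗ[k] k := W.counit ∘ₗ LinearMap.mulLeft k x with hf
  set Φ : (H ⊗[k] H) ⊗[k] H →ₗ[k] H ⊗[k] H :=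
    (TensorProduct.rid k (H ⊗[k] H)).toLinearMap ∘ₗ TensorProduct.map LinearMap.id f with hΦ
  have hB : ∀ t : H ⊗[k] H,
      Φ ((TensorProduct.map W.comul LinearMap.id) t) =
        W.comul ((TensorProduct.rid k H) ((TensorProduct.map LinearMap.id f) t)) := by
    intro t
    induction t using TensorProduct.induction_on with
    | zero => simp
    | tmul a b => simp [hΦ, TensorProduct.smul_tmul', map_smul]
    | add u v hu hv => simp only [map_add, hu, hv]
  have hC : ∀ t : H ⊗[k] H,
      Φ ((W.comul 1 ⊗ₜ[k] (1 : H)) * ((TensorProduct.assoc k H H H).symm ((1 : H) ⊗ₜ[k] t))) =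
        W.comul 1 * ((1 : H) ⊗ₜ[k]
          (TensorProduct.rid k H) ((TensorProduct.map LinearMap.id f) t)) := by
    intro t
    induction t using TensorProduct.induction_on with
    | zero => simp
    | tmul a b =>
        have h1 : (TensorProduct.assoc k H H H).symm ((1 : H) ⊗ₜ[k] (a ⊗ₜ[k] b)) =
            ((1 : H) ⊗ₜ[k] a) ⊗ₜ[k] b := by simp
        rw [h1, Algebra.TensorProduct.tmul_mul_tmul, one_mul]
        simp [hΦ, TensorProduct.tmul_smul, mul_smul_comm]
    | add u v hu hv =>
        simp only [tmul_add, map_add, mul_add, hu, hv]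
  have h1 : W.comul (W.εsL x) =
      Φ ((TensorProduct.map W.comul LinearMap.id) (W.comul 1)) := by
    rw [hB (W.comul 1), W.εsL_eq x]
  rw [h1, W.weak_unit_left, hC (W.comul 1), ← W.εsL_eq x]

/-- For y in the image of ε_s: Δ(ℓ y) = Δ(ℓ)·(1 ⊗ y). -/
lemma WeakHopf.comul_mul_εsL (ℓ x : H) :
    W.comul (ℓ * W.εsL x) = W.comul ℓ * ((1 : H) ⊗ₜ[k] W.εsL x) := by
  have h0 : W.comul ℓ * W.comul 1 = W.comul ℓ := by
    rw [← W.comul_mul, mul_one]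
  rw [W.comul_mul, W.comul_εsL, ← mul_assoc, h0]

lemma WeakHopf.pairing_mulRight (ℓ y : H) (φ : H →ₗ[k] k) :
    (TensorProduct.rid k H)
      ((TensorProduct.map LinearMap.id (φ ∘ₗ LinearMap.mulRight k y)) (W.comul ℓ)) =
    (TensorProduct.rid k H)
      ((TensorProduct.map LinearMap.id φ) (W.comul ℓ * ((1 : H) ⊗ₜ[k] y))) := by
  induction (W.comul ℓ) using TensorProduct.induction_on with
  | zero => simp
  | tmul a b => rw [Algebra.TensorProduct.tmul_mul_tmul, mul_one]; simp
  | add u v hu hv => simp only [map_add, add_mul, hu, hv]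

end Aux

/-- A non-degenerate left integral ℓ is separating for right
multiplication by H_s, and y ↦ ℓy is a linear isomorphism from H_s onto the
space of left integrals. -/
theorem weakHopf_integral_separating {k H : Type*} [Field k] [Ring H] [Algebra k H]
    [FiniteDimensional k H] (W : WeakHopf k H) (ℓ : H)
    (hl : ℓ ∈ W.leftIntegrals)
    (hnd : Function.Bijective (fun φ : H →ₗ[k] k =>
      (TensorProduct.rid k H) ((TensorProduct.map LinearMap.id φ) (W.comul ℓ))))
    (hdim : Module.finrank k W.leftIntegrals =
      Module.finrank k (LinearMap.range W.εsL)) :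
    (∀ y ∈ LinearMap.range W.εsL, ℓ * y = 0 → y = 0) ∧
    (∀ y ∈ LinearMap.range W.εsL, ℓ * y ∈ W.leftIntegrals) ∧
    (∀ x ∈ W.leftIntegrals, ∃ y ∈ LinearMap.range W.εsL, ℓ * y = x) := by
  have hint : ∀ y : H, ℓ * y ∈ W.leftIntegrals := by
    intro y h
    rw [← mul_assoc, hl h, mul_assoc]
  have sep : ∀ y ∈ LinearMap.range W.εsL, ℓ * y = 0 → y = 0 := by
    rintro y ⟨x, rfl⟩ h0
    have key : ∀ φ : H →ₗ[k] k, φ ∘ₗ LinearMap.mulRight k (W.εsL x) = 0 := by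
      intro φ
      apply hnd.injective
      show (TensorProduct.rid k H)
          ((TensorProduct.map LinearMap.id (φ ∘ₗ LinearMap.mulRight k (W.εsL x)))
            (W.comul ℓ)) =
        (TensorProduct.rid k H)
          ((TensorProduct.map LinearMap.id (0 : H →ₗ[k] k)) (W.comul ℓ))
      rw [W.pairing_mulRight, ← W.comul_mul_εsL, h0]
      simp
    have hz : ∀ φ : H →ₗ[k] k, φ (W.εsL x) = 0 := by
      intro φ
      have := congrArg (fun g : H →ₗ[k] k => g 1) (key φ)
      simpa using this
    exact (Module.forall_dual_apply_eq_zero_iff k (W.εsL x)).mp hz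
  refine ⟨sep, fun y _ => hint y, ?_⟩
  let L0 : ↥(LinearMap.range W.εsL) →ₗ[k] H :=
    (LinearMap.mulLeft k ℓ) ∘ₗ (LinearMap.range W.εsL).subtype
  let L : ↥(LinearMap.range W.εsL) →ₗ[k] ↥W.leftIntegrals :=
    L0.codRestrict W.leftIntegrals (fun c => hint c)
  have hLinj : Function.Injective L := by
    intro a b hab
    have h1 : ℓ * (a : H) = ℓ * (b : H) := by
      have := congrArg Subtype.val hab
      exact this
    have h2 : ℓ * ((a : H) - (b : H)) = 0 := by
      rw [mul_sub, h1, sub_self]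
    have h3 := sep _ (Submodule.sub_mem _ a.2 b.2) h2
    exact Subtype.ext (sub_eq_zero.mp h3)
  have hLsurj :=
    (LinearMap.injective_iff_surjective_of_finrank_eq_finrank hdim.symm).mp hLinj
  intro x hx
  obtain ⟨y, hy⟩ := hLsurj ⟨x, hx⟩
  exact ⟨y, y.2, congrArg Subtype.val hy⟩
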